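/- Let (X,T) be a topological dynamical system. Suppose F = {f₁,…,f_p} ⊆ C(X) is a finite set such that the closed linear span of {f_i ∘ Tⁿ : 1 ≤ i ≤ p, n ∈ ℤ} ∪ B_T(X) equals C(X), and G = {g₁,…,g_q} is a finite subset of the closure of B_T(X) such that the closed linear span of {g_j ∘ Tⁿ : 1 ≤ j ≤ q, n ∈ ℤ} equals the closure of B_T(X). Then there exists a set H ⊆ C(X) with at most p + q − 1 elements such that the linear span of {h ∘ Tⁿ : h ∈ H, n ∈ ℤ} is dense in C(X). Consequently Mult(T) ≤ p + q − 1. -/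

import Mathlib

/-- Iterates of a homeomorphism, indexed by natural numbers. -/
def hiterN {X : Type*} [TopologicalSpace X] (T : X ≃ₜ X) : ℕ → (X ≃ₜ X)
  | 0 => Homeomorph.refl X
  | n + 1 => (hiterN T n).trans T

/-- Iterates of a homeomorphism, indexed by integers. -/
def hiter {X : Type*} [TopologicalSpace X] (T : X ≃ₜ X) : ℤ → (X ≃ₜ X)
  | Int.ofNat n => hiterN T n
  | Int.negSucc n => (hiterN T (n + 1)).symm

/-- The set of all iterates `f ∘ Tⁿ` for `f ∈ F` and `n ∈ ℤ`. -/
def iterSet {X : Type*} [TopologicalSpace X] (T : X ≃ₜ X) (F : Set C(X, ℝ)) :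
    Set C(X, ℝ) :=
  {h | ∃ f ∈ F, ∃ n : ℤ, h = f.comp (hiter T n : C(X, X))}

/-- The set `B_T(X) = {φ ∘ T - φ : φ ∈ C(X)}` of continuous `T`-coboundaries. -/
def cobSet {X : Type*} [TopologicalSpace X] (T : X ≃ₜ X) : Set C(X, ℝ) :=
  {g | ∃ φ : C(X, ℝ), g = φ.comp (T : C(X, X)) - φ}

/-! ### Auxiliary lemmas -/

section Aux

variable {X : Type*} [TopologicalSpace X] (T : X ≃ₜ X)

lemma hiterN_succ_apply (n : ℕ) (x : X) : hiterN T (n + 1) x = T (hiterN T n x) := rfl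

lemma hiterN_comm (n : ℕ) (x : X) : hiterN T n (T x) = T (hiterN T n x) := by
  induction n with
  | zero => rfl
  | succ n ih =>
      show T (hiterN T n (T x)) = T (T (hiterN T n x))
      rw [ih]

lemma hiter_natCast (n : ℕ) : hiter T (n : ℤ) = hiterN T n := rfl

lemma hiter_zero : hiter T 0 = Homeomorph.refl X := rfl

lemma hiter_succ (n : ℤ) (x : X) : hiter T (n + 1) x = hiter T n (T x) := by
  cases n with
  | ofNat m =>
      have h1 : (Int.ofNat m) + 1 = Int.ofNat (m + 1) := rfl
      rw [h1]
      show hiterN T (m + 1) x = hiterN T m (T x)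
      rw [hiterN_succ_apply, hiterN_comm]
  | negSucc m =>
      cases m with
      | zero =>
          have h1 : Int.negSucc 0 + 1 = 0 := rfl
          rw [h1]
          show x = (hiterN T 1).symm (T x)
          rw [show T x = hiterN T 1 x from rfl, Homeomorph.symm_apply_apply]
      | succ k =>
          have h1 : Int.negSucc (k + 1) + 1 = Int.negSucc k := by
            rw [Int.negSucc_eq, Int.negSucc_eq]
            push_cast
            ring
          rw [h1]
          show (hiterN T (k + 1)).symm x = (hiterN T (k + 2)).symm (T x)
          have hTx : T x = hiterN T (k + 2) ((hiterN T (k + 1)).symm x) := by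
            show T x = T (hiterN T (k + 1) ((hiterN T (k + 1)).symm x))
            rw [Homeomorph.apply_symm_apply]
          rw [hTx, Homeomorph.symm_apply_apply]

lemma comp_hiter_succ (f : C(X, ℝ)) (n : ℤ) :
    f.comp ((hiter T (n + 1) : X ≃ₜ X) : C(X, X))
      = (f.comp ((hiter T n : X ≃ₜ X) : C(X, X))).comp (T : C(X, X)) := by
  ext x
  simp only [ContinuousMap.comp_apply, ContinuousMap.coe_coe]
  rw [hiter_succ]

lemma comp_hiter_zero (f : C(X, ℝ)) :
    f.comp ((hiter T 0 : X ≃ₜ X) : C(X, X)) = f := by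
  ext x
  rfl

/-- The coboundary operator as a linear map. -/
def cobL : C(X, ℝ) →ₗ[ℝ] C(X, ℝ) where
  toFun φ := φ.comp (T : C(X, X)) - φ
  map_add' φ ψ := by ext x; simp; ring
  map_smul' c φ := by ext x; simp [mul_sub]

lemma cobL_apply (φ : C(X, ℝ)) : cobL T φ = φ.comp (T : C(X, X)) - φ := rfl

lemma range_cobL : ((LinearMap.range (cobL T) : Submodule ℝ C(X, ℝ)) : Set C(X, ℝ))
    = cobSet T := by
  ext ψ
  constructor
  · rintro ⟨φ, rfl⟩
    exact ⟨φ, rfl⟩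
  · rintro ⟨φ, hφ⟩
    exact ⟨φ, hφ.symm⟩

lemma iter_mem_cob (f : C(X, ℝ)) (n : ℤ) :
    f.comp ((hiter T n : X ≃ₜ X) : C(X, X)) - f ∈ LinearMap.range (cobL T) := by
  induction n using Int.induction_on with
  | zero => rw [comp_hiter_zero, sub_self]; exact Submodule.zero_mem _
  | succ k ih =>
      have hC := comp_hiter_succ T f (k : ℤ)
      have heq : f.comp ((hiter T ((k : ℤ) + 1) : X ≃ₜ X) : C(X, X)) - f
          = cobL T (f.comp ((hiter T (k : ℤ) : X ≃ₜ X) : C(X, X)))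
            + (f.comp ((hiter T (k : ℤ) : X ≃ₜ X) : C(X, X)) - f) := by
        rw [cobL_apply, ← hC]; abel
      rw [heq]
      exact add_mem (LinearMap.mem_range_self _ _) ih
  | pred k ih =>
      have harith : (-(k : ℤ) - 1) + 1 = -(k : ℤ) := by ring
      have hC := comp_hiter_succ T f (-(k : ℤ) - 1)
      rw [harith] at hC
      have heq : f.comp ((hiter T (-(k : ℤ) - 1) : X ≃ₜ X) : C(X, X)) - f
          = (f.comp ((hiter T (-(k : ℤ)) : X ≃ₜ X) : C(X, X)) - f)
            - cobL T (f.comp ((hiter T (-(k : ℤ) - 1) : X ≃ₜ X) : C(X, X))) := by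
        rw [cobL_apply, ← hC]; abel
      rw [heq]
      exact sub_mem ih (LinearMap.mem_range_self _ _)

lemma one_comp (σ : C(X, X)) : (1 : C(X, ℝ)).comp σ = 1 := by
  ext x; rfl

end Aux

section AuxCompact

variable {X : Type*} [MetricSpace X] [CompactSpace X] (T : X ≃ₜ X)

lemma norm_comp_le (f : C(X, ℝ)) (σ : C(X, X)) : ‖f.comp σ‖ ≤ ‖f‖ := by
  rw [ContinuousMap.norm_le _ (norm_nonneg f)]
  intro x
  simpa using f.norm_coe_le_norm (σ x)

lemma one_notMem_closure_cobSet [Nonempty X] : (1 : C(X, ℝ)) ∉ closure (cobSet T) := by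
  intro hmem
  obtain ⟨b, hb, hdist⟩ := Metric.mem_closure_iff.mp hmem 1 one_pos
  obtain ⟨φ, rfl⟩ := hb
  obtain ⟨x₀, hx₀⟩ := φ.continuous.exists_forall_ge' (Classical.arbitrary X)
    (by simp [Filter.cocompact_eq_bot])
  have h1 : φ ((T : C(X, X)) x₀) ≤ φ x₀ := hx₀ _
  have hval : ((1 : C(X, ℝ)) - (φ.comp (T : C(X, X)) - φ)) x₀
      = 1 - (φ ((T : C(X, X)) x₀) - φ x₀) := by
    simp
  have h2 : (1 : ℝ) ≤ ‖(1 : C(X, ℝ)) - (φ.comp (T : C(X, X)) - φ)‖ := by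
    have hle := ContinuousMap.norm_coe_le_norm
      ((1 : C(X, ℝ)) - (φ.comp (T : C(X, X)) - φ)) x₀
    rw [hval, Real.norm_eq_abs] at hle
    have : (1 : ℝ) ≤ 1 - (φ ((T : C(X, X)) x₀) - φ x₀) := by linarith
    calc (1 : ℝ) ≤ 1 - (φ ((T : C(X, X)) x₀) - φ x₀) := this
      _ ≤ |1 - (φ ((T : C(X, X)) x₀) - φ x₀)| := le_abs_self _
      _ ≤ _ := hle
  rw [dist_eq_norm] at hdist
  linarith

/-- Window-averaging: if all the values `μ (g ∘ Tⁿ)` are equal to a constant `c` for a `g` in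
the closure of the coboundaries, then `c = 0`. -/
lemma window_const_eq_zero (μ : C(X, ℝ) →L[ℝ] ℝ) {g : C(X, ℝ)}
    (hg : g ∈ closure (cobSet T)) (c : ℝ)
    (hc : ∀ n : ℕ, μ (g.comp ((hiterN T n : X ≃ₜ X) : C(X, X))) = c) : c = 0 := by
  have key : ∀ ε : ℝ, 0 < ε → |c| ≤ (‖μ‖ + 1) * ε := by
    intro ε hε
    obtain ⟨b, hbcob, hbd⟩ := Metric.mem_closure_iff.mp hg ε hε
    obtain ⟨φ, rfl⟩ := hbcob
    obtain ⟨N₀, hN₀⟩ := exists_nat_ge (2 * ‖μ‖ * ‖φ‖ / ε)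
    set N : ℕ := N₀ + 1 with hNdef
    set S : C(X, ℝ) := ∑ n ∈ Finset.range N,
      g.comp ((hiterN T n : X ≃ₜ X) : C(X, X)) with hSdef
    have hμS : μ S = (N : ℝ) * c := by
      rw [hSdef, map_sum, Finset.sum_congr rfl (fun n _ => hc n)]
      simp [Finset.sum_const, Finset.card_range, nsmul_eq_mul]
    have hterm : ∀ n : ℕ, g.comp ((hiterN T n : X ≃ₜ X) : C(X, X))
        = (g - (φ.comp (T : C(X, X)) - φ)).comp ((hiterN T n : X ≃ₜ X) : C(X, X))
          + (φ.comp ((hiterN T (n + 1) : X ≃ₜ X) : C(X, X))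
              - φ.comp ((hiterN T n : X ≃ₜ X) : C(X, X))) := by
      intro n
      ext x
      simp [hiterN_succ_apply]
    have hsum : S = (∑ n ∈ Finset.range N,
          (g - (φ.comp (T : C(X, X)) - φ)).comp ((hiterN T n : X ≃ₜ X) : C(X, X)))
        + (φ.comp ((hiterN T N : X ≃ₜ X) : C(X, X))
            - φ.comp ((hiterN T 0 : X ≃ₜ X) : C(X, X))) := by
      rw [hSdef, Finset.sum_congr rfl (fun n _ => hterm n), Finset.sum_add_distrib,
        Finset.sum_range_sub (fun n => φ.comp ((hiterN T n : X ≃ₜ X) : C(X, X)))]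
    have hnorm : ‖S‖ ≤ (N : ℝ) * ε + 2 * ‖φ‖ := by
      rw [hsum]
      refine le_trans (norm_add_le _ _) ?_
      have h1 : ‖∑ n ∈ Finset.range N,
          (g - (φ.comp (T : C(X, X)) - φ)).comp ((hiterN T n : X ≃ₜ X) : C(X, X))‖
            ≤ (N : ℝ) * ε := by
        refine le_trans (norm_sum_le _ _) ?_
        have hbound : ∀ n ∈ Finset.range N,
            ‖(g - (φ.comp (T : C(X, X)) - φ)).comp ((hiterN T n : X ≃ₜ X) : C(X, X))‖ ≤ ε := by
          intro n _
          refine le_trans (norm_comp_le _ _) ?_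
          rw [dist_eq_norm] at hbd
          exact le_of_lt hbd
        calc ∑ n ∈ Finset.range N,
              ‖(g - (φ.comp (T : C(X, X)) - φ)).comp ((hiterN T n : X ≃ₜ X) : C(X, X))‖
            ≤ ∑ _n ∈ Finset.range N, ε := Finset.sum_le_sum hbound
          _ = (N : ℝ) * ε := by simp [Finset.sum_const, Finset.card_range, nsmul_eq_mul]
      have h2 : ‖φ.comp ((hiterN T N : X ≃ₜ X) : C(X, X))
          - φ.comp ((hiterN T 0 : X ≃ₜ X) : C(X, X))‖ ≤ 2 * ‖φ‖ := by
        refine le_trans (norm_sub_le _ _) ?_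
        have hb1 := norm_comp_le φ ((hiterN T N : X ≃ₜ X) : C(X, X))
        have hb2 := norm_comp_le φ ((hiterN T 0 : X ≃ₜ X) : C(X, X))
        linarith
      linarith
    have hNpos : (0 : ℝ) < (N : ℝ) := by
      have : (0 : ℕ) < N := Nat.succ_pos N₀
      exact_mod_cast this
    have hcbound : (N : ℝ) * |c| ≤ ‖μ‖ * ((N : ℝ) * ε + 2 * ‖φ‖) := by
      have h1 : |μ S| ≤ ‖μ‖ * ‖S‖ := by
        simpa [Real.norm_eq_abs] using μ.le_opNorm S
      rw [hμS] at h1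
      have h2 : |(N : ℝ) * c| = (N : ℝ) * |c| := by
        rw [abs_mul, abs_of_nonneg hNpos.le]
      rw [h2] at h1
      refine le_trans h1 ?_
      exact mul_le_mul_of_nonneg_left hnorm (norm_nonneg μ)
    have hNe : 2 * ‖μ‖ * ‖φ‖ ≤ (N : ℝ) * ε := by
      have hcast : (N₀ : ℝ) ≤ (N : ℝ) := by exact_mod_cast Nat.le_succ N₀
      have h3 : 2 * ‖μ‖ * ‖φ‖ / ε ≤ (N : ℝ) := le_trans hN₀ hcast
      calc 2 * ‖μ‖ * ‖φ‖ = (2 * ‖μ‖ * ‖φ‖ / ε) * ε := by field_simp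
        _ ≤ (N : ℝ) * ε := mul_le_mul_of_nonneg_right h3 hε.le
    have hfin : (N : ℝ) * |c| ≤ (N : ℝ) * ((‖μ‖ + 1) * ε) := by nlinarith
    exact le_of_mul_le_mul_left hfin hNpos
  by_contra hcne
  have habs : 0 < |c| := abs_pos.mpr hcne
  have hpos : 0 < ‖μ‖ + 1 := by positivity
  have hk := key (|c| / (2 * (‖μ‖ + 1))) (by positivity)
  have heq : (‖μ‖ + 1) * (|c| / (2 * (‖μ‖ + 1))) = |c| / 2 := by
    field_simp
  rw [heq] at hk
  linarith

end AuxCompact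

section ClosedSup

variable {E : Type*} [NormedAddCommGroup E] [NormedSpace ℝ E]

lemma line_sup_closed (K : Submodule ℝ E) (hK : IsClosed (K : Set E)) (v : E) :
    IsClosed ((Submodule.span ℝ {v} ⊔ K : Submodule ℝ E) : Set E) := by
  by_cases hv : v ∈ K
  · have hle : Submodule.span ℝ {v} ≤ K := by
      rw [Submodule.span_le]
      simpa using hv
    rw [sup_eq_right.mpr hle]
    exact hK
  · have hKne : (K : Set E).Nonempty := ⟨0, K.zero_mem⟩
    have hδpos : 0 < Metric.infDist v (K : Set E) := by
      rcases lt_or_eq_of_le (Metric.infDist_nonneg (s := (K : Set E)) (x := v)) with h | h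
      · exact h
      · exfalso
        have : v ∈ closure (K : Set E) :=
          (Metric.mem_closure_iff_infDist_zero hKne).mpr h.symm
        rw [hK.closure_eq] at this
        exact hv this
    set δ := Metric.infDist v (K : Set E) with hδdef
    have key : ∀ (t : ℝ), ∀ k ∈ K, |t| * δ ≤ ‖t • v + k‖ := by
      intro t k hk
      rcases eq_or_ne t 0 with rfl | ht
      · simp
      · have hmem : -(t⁻¹ • k) ∈ (K : Set E) := K.neg_mem (K.smul_mem _ hk)
        have h1 : δ ≤ dist v (-(t⁻¹ • k)) := Metric.infDist_le_dist_of_mem hmem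
        have h2 : dist v (-(t⁻¹ • k)) = ‖v + t⁻¹ • k‖ := by
          rw [dist_eq_norm, sub_neg_eq_add]
        rw [h2] at h1
        calc |t| * δ ≤ |t| * ‖v + t⁻¹ • k‖ :=
              mul_le_mul_of_nonneg_left h1 (abs_nonneg t)
          _ = ‖t • (v + t⁻¹ • k)‖ := by rw [norm_smul, Real.norm_eq_abs]
          _ = ‖t • v + k‖ := by rw [smul_add, smul_inv_smul₀ ht]
    apply IsSeqClosed.isClosed
    intro u x hu hux
    have hdec : ∀ n, ∃ t : ℝ, ∃ k, k ∈ K ∧ u n = t • v + k := by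
      intro n
      rcases Submodule.mem_sup.mp (hu n) with ⟨y, hy, z, hz, hyz⟩
      rcases Submodule.mem_span_singleton.mp hy with ⟨t, rfl⟩
      exact ⟨t, z, hz, hyz.symm⟩
    choose tt kk hkK hdecomp using hdec
    have hucauchy : CauchySeq u := hux.cauchySeq
    have htcauchy : CauchySeq tt := by
      rw [Metric.cauchySeq_iff] at hucauchy ⊢
      intro ε hε
      obtain ⟨M, hM⟩ := hucauchy (δ * ε) (by positivity)
      refine ⟨M, fun m hm n hn => ?_⟩
      have hkey := key (tt m - tt n) (kk m - kk n) (K.sub_mem (hkK m) (hkK n))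
      have heq2 : (tt m - tt n) • v + (kk m - kk n) = u m - u n := by
        rw [hdecomp m, hdecomp n, sub_smul]
        abel
      rw [heq2] at hkey
      have hlt : ‖u m - u n‖ < δ * ε := by
        rw [← dist_eq_norm]
        exact hM m hm n hn
      have hlt2 : |tt m - tt n| * δ < δ * ε := lt_of_le_of_lt hkey hlt
      rw [Real.dist_eq]
      nlinarith [abs_nonneg (tt m - tt n)]
    obtain ⟨t', ht'⟩ := cauchySeq_tendsto_of_complete htcauchy
    have hkk : ∀ n, kk n = u n - tt n • v := by
      intro n
      rw [hdecomp n]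
      abel
    have hk' : Filter.Tendsto kk Filter.atTop (nhds (x - t' • v)) := by
      have : (fun n => u n - tt n • v) = kk := funext fun n => (hkk n).symm
      rw [← this]
      exact hux.sub (ht'.smul_const v)
    have hxk : x - t' • v ∈ K := by
      have := hK.mem_of_tendsto hk' (Filter.Eventually.of_forall (fun n => hkK n))
      exact this
    refine Submodule.mem_sup.mpr ⟨t' • v, ?_, x - t' • v, hxk, by abel⟩
    exact Submodule.mem_span_singleton.mpr ⟨t', rfl⟩

lemma span_finset_sup_closed (s : Finset E) (K : Submodule ℝ E) (hK : IsClosed (K : Set E)) :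
    IsClosed ((Submodule.span ℝ (s : Set E) ⊔ K : Submodule ℝ E) : Set E) := by
  classical
  induction s using Finset.induction_on with
  | empty =>
      have : Submodule.span ℝ ((∅ : Finset E) : Set E) ⊔ K = K := by
        simp [Submodule.span_empty]
      rw [this]
      exact hK
  | @insert a s ha ih =>
      have hrw : Submodule.span ℝ ((insert a s : Finset E) : Set E) ⊔ K
          = Submodule.span ℝ {a} ⊔ (Submodule.span ℝ (s : Set E) ⊔ K) := by
        rw [Finset.coe_insert, Submodule.span_insert, sup_assoc]
      rw [hrw]
      exact line_sup_closed _ ih a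

end ClosedSup

/-- Let `(X, T)` be a topological dynamical system.  Suppose `F = {f₁, …, f_p} ⊆ C(X)` is
such that the closed linear span of `{fᵢ ∘ Tⁿ} ∪ B_T(X)` is all of `C(X)`, and
`G = {g₁, …, g_q}` is a finite subset of the closure of `B_T(X)` whose closed span of
iterates equals the closure of `B_T(X)`.  Then there is a set `H ⊆ C(X)` with at most
`p + q - 1` elements whose iterates span a dense subspace of `C(X)`; consequently
`Mult(T) ≤ p + q - 1`. -/
theorem mult_le_quotient_mult_add_coboundary_mult_sub_one
    {X : Type*} [MetricSpace X] [CompactSpace X]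
    (T : X ≃ₜ X) (p q : ℕ) (hp : 1 ≤ p) (hq : 1 ≤ q)
    (F G : Finset C(X, ℝ)) (hFcard : F.card = p) (hGcard : G.card = q)
    (hF : closure (Submodule.span ℝ (iterSet T (F : Set C(X, ℝ)) ∪ cobSet T) : Set C(X, ℝ))
      = Set.univ)
    (hGsub : (G : Set C(X, ℝ)) ⊆ closure (cobSet T))
    (hG : closure (Submodule.span ℝ (iterSet T (G : Set C(X, ℝ))) : Set C(X, ℝ))
      = closure (cobSet T)) :
    ∃ H : Finset C(X, ℝ), H.card ≤ p + q - 1 ∧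
      Dense (Submodule.span ℝ (iterSet T (H : Set C(X, ℝ))) : Set C(X, ℝ)) := by
  classical
  by_cases hX : Nonempty X
  swap
  · -- X is empty: C(X, ℝ) is a subsingleton, so everything is dense.
    have hXe : IsEmpty X := not_nonempty_iff.mp hX
    refine ⟨∅, Nat.zero_le _, ?_⟩
    have hsub : Subsingleton C(X, ℝ) := ⟨fun a b => ContinuousMap.ext fun x => hXe.elim x⟩
    rw [dense_iff_closure_eq]
    apply Set.eq_univ_of_forall
    intro x
    have hx0 : x = 0 := Subsingleton.elim x 0
    rw [hx0]
    exact subset_closure (Submodule.zero_mem _)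
  -- Main case: X nonempty.
  obtain ⟨g₁, hg₁G⟩ : G.Nonempty := Finset.card_pos.mp (by rw [hGcard]; exact hq)
  have hg₁cl : g₁ ∈ closure (cobSet T) := hGsub hg₁G
  set K : Submodule ℝ C(X, ℝ) := (LinearMap.range (cobL T)).topologicalClosure with hKdef
  have hKset : (K : Set C(X, ℝ)) = closure (cobSet T) := by
    rw [hKdef, Submodule.topologicalClosure_coe, range_cobL]
  have hKclosed : IsClosed (K : Set C(X, ℝ)) := Submodule.isClosed_topologicalClosure _
  -- `1` belongs to `span F ⊔ K`.
  have hsupclosed : IsClosed ((Submodule.span ℝ (F : Set C(X, ℝ)) ⊔ K :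
      Submodule ℝ C(X, ℝ)) : Set C(X, ℝ)) := span_finset_sup_closed F K hKclosed
  have hsple : Submodule.span ℝ (iterSet T (F : Set C(X, ℝ)) ∪ cobSet T)
      ≤ Submodule.span ℝ (F : Set C(X, ℝ)) ⊔ K := by
    rw [Submodule.span_le]
    rintro z (⟨f, hf, n, rfl⟩ | hz)
    · have h1 : f ∈ Submodule.span ℝ (F : Set C(X, ℝ)) ⊔ K :=
        Submodule.mem_sup_left (Submodule.subset_span hf)
      have h2 : f.comp ((hiter T n : X ≃ₜ X) : C(X, X)) - f
          ∈ Submodule.span ℝ (F : Set C(X, ℝ)) ⊔ K :=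
        Submodule.mem_sup_right
          ((LinearMap.range (cobL T)).le_topologicalClosure (iter_mem_cob T f n))
      have h3 := add_mem h1 h2
      have heq : f + (f.comp ((hiter T n : X ≃ₜ X) : C(X, X)) - f)
          = f.comp ((hiter T n : X ≃ₜ X) : C(X, X)) := by abel
      rw [heq] at h3
      exact h3
    · refine Submodule.mem_sup_right ?_
      have : z ∈ (K : Set C(X, ℝ)) := by
        rw [hKset]
        exact subset_closure hz
      exact this
  have hone : (1 : C(X, ℝ)) ∈ Submodule.span ℝ (F : Set C(X, ℝ)) ⊔ K := by
    have h1 : (1 : C(X, ℝ)) ∈ closure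
        ((Submodule.span ℝ (iterSet T (F : Set C(X, ℝ)) ∪ cobSet T)) : Set C(X, ℝ)) := by
      rw [hF]; trivial
    have h2 : closure ((Submodule.span ℝ (iterSet T (F : Set C(X, ℝ)) ∪ cobSet T)) :
        Set C(X, ℝ)) ⊆ ((Submodule.span ℝ (F : Set C(X, ℝ)) ⊔ K :
          Submodule ℝ C(X, ℝ)) : Set C(X, ℝ)) :=
      closure_minimal (SetLike.coe_subset_coe.mpr hsple) hsupclosed
    exact h2 h1
  obtain ⟨v, hv, k, hkK, hvk⟩ := Submodule.mem_sup.mp hone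
  obtain ⟨cf, -, hcf⟩ := Submodule.mem_span_finset.mp hv
  have hex : ∃ f₀ ∈ F, cf f₀ ≠ 0 := by
    by_contra hall
    push_neg at hall
    have hv0 : v = 0 := by
      rw [← hcf]
      exact Finset.sum_eq_zero (fun i hi => by rw [hall i hi, zero_smul])
    have h1k : (1 : C(X, ℝ)) = k := by rw [← hvk, hv0, zero_add]
    have : (1 : C(X, ℝ)) ∈ (K : Set C(X, ℝ)) := by rw [h1k]; exact hkK
    rw [hKset] at this
    exact one_notMem_closure_cobSet T this
  obtain ⟨f₀, hf₀F, hcf₀⟩ := hex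
  -- The generating family of cardinality `p + q - 1`.
  set h₀ : C(X, ℝ) := 1 + g₁ with hh₀def
  set H : Finset C(X, ℝ) := insert h₀ ((F.erase f₀) ∪ (G.erase g₁)) with hHdef
  refine ⟨H, ?_, ?_⟩
  · calc H.card ≤ ((F.erase f₀) ∪ (G.erase g₁)).card + 1 := Finset.card_insert_le _ _
      _ ≤ ((F.erase f₀).card + (G.erase g₁).card) + 1 :=
          add_le_add_left (Finset.card_union_le _ _) 1
      _ ≤ p + q - 1 := by
          rw [Finset.card_erase_of_mem hf₀F, Finset.card_erase_of_mem hg₁G, hFcard, hGcard]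
          omega
  -- Density.
  by_contra hnd
  set S : Submodule ℝ C(X, ℝ) := Submodule.span ℝ (iterSet T (H : Set C(X, ℝ))) with hSdef
  have hneq : closure (S : Set C(X, ℝ)) ≠ Set.univ :=
    fun h => hnd (dense_iff_closure_eq.mpr h)
  obtain ⟨x₀, hx₀⟩ := (Set.ne_univ_iff_exists_notMem _).mp hneq
  have hclconv : Convex ℝ (closure (S : Set C(X, ℝ))) := S.convex.closure
  obtain ⟨μ, u, hμlt, hμx⟩ :=
    geometric_hahn_banach_closed_point hclconv isClosed_closure hx₀
  -- μ vanishes on the closure of S.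
  have hμ0 : ∀ z ∈ closure (S : Set C(X, ℝ)), μ z = 0 := by
    intro z hz
    by_contra hzne
    have hz' : z ∈ S.topologicalClosure := by
      rw [← Submodule.topologicalClosure_coe] at hz
      exact hz
    have hmem : ((u + 1) / μ z) • z ∈ closure (S : Set C(X, ℝ)) := by
      rw [← Submodule.topologicalClosure_coe]
      exact Submodule.smul_mem _ _ hz'
    have hlt := hμlt _ hmem
    rw [map_smul, smul_eq_mul, div_mul_cancel₀ _ hzne] at hlt
    linarith
  have hu0 : 0 < u := by
    have h0 := hμlt 0 (subset_closure (S.zero_mem))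
    simpa using h0
  -- μ kills all iterates of members of H.
  have hkill : ∀ h ∈ H, ∀ n : ℤ, μ (h.comp ((hiter T n : X ≃ₜ X) : C(X, X))) = 0 := by
    intro h hh n
    refine hμ0 _ (subset_closure ?_)
    exact Submodule.subset_span ⟨h, Finset.mem_coe.mpr hh, n, rfl⟩
  -- Constancy of μ on the g₁-orbit.
  have hg₁const : ∀ n : ℤ, μ (g₁.comp ((hiter T n : X ≃ₜ X) : C(X, X))) = -μ 1 := by
    intro n
    have h1 := hkill h₀ (Finset.mem_insert_self _ _) n
    have h2 : h₀.comp ((hiter T n : X ≃ₜ X) : C(X, X))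
        = 1 + g₁.comp ((hiter T n : X ≃ₜ X) : C(X, X)) := by
      rw [hh₀def, ContinuousMap.add_comp, one_comp]
    rw [h2, map_add] at h1
    linarith
  have hμ1 : μ (1 : C(X, ℝ)) = 0 := by
    have hw := window_const_eq_zero T μ hg₁cl (-μ 1) ?_
    · linarith
    · intro n
      have := hg₁const ((n : ℕ) : ℤ)
      rwa [hiter_natCast] at this
  have hg₁kill : ∀ n : ℤ, μ (g₁.comp ((hiter T n : X ≃ₜ X) : C(X, X))) = 0 := by
    intro n
    rw [hg₁const n, hμ1, neg_zero]
  -- μ kills all iterates of all members of G.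
  have hGkill : ∀ g ∈ G, ∀ n : ℤ, μ (g.comp ((hiter T n : X ≃ₜ X) : C(X, X))) = 0 := by
    intro g hg n
    rcases eq_or_ne g g₁ with rfl | hne
    · exact hg₁kill n
    · exact hkill g (Finset.mem_insert_of_mem
        (Finset.mem_union_right _ (Finset.mem_erase.mpr ⟨hne, hg⟩))) n
  -- μ kills the closure of the coboundaries.
  have hker_closed : IsClosed {z : C(X, ℝ) | μ z = 0} :=
    isClosed_eq μ.continuous continuous_const
  have hKkill : ∀ z ∈ closure (cobSet T), μ z = 0 := by
    have hsub1 : ((Submodule.span ℝ (iterSet T (G : Set C(X, ℝ)))) : Set C(X, ℝ))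
        ⊆ {z : C(X, ℝ) | μ z = 0} := by
      intro z hz
      have hz' : z ∈ Submodule.span ℝ (iterSet T (G : Set C(X, ℝ))) := hz
      refine Submodule.span_induction ?_ ?_ ?_ ?_ hz'
      · rintro w ⟨g, hg, n, rfl⟩
        exact hGkill g hg n
      · simp
      · intro a b _ _ ha hb
        simp only [Set.mem_setOf_eq] at *
        rw [map_add, ha, hb, add_zero]
      · intro a w _ hw
        simp only [Set.mem_setOf_eq] at *
        rw [map_smul, smul_eq_mul, hw, mul_zero]
    have h1 : closure ((Submodule.span ℝ (iterSet T (G : Set C(X, ℝ)))) : Set C(X, ℝ))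
        ⊆ {z : C(X, ℝ) | μ z = 0} := closure_minimal hsub1 hker_closed
    rw [hG] at h1
    exact fun z hz => h1 hz
  -- μ kills every element of F.
  have hmemF : ∀ f ∈ F.erase f₀, μ f = 0 := by
    intro f hf
    have hk0 := hkill f (Finset.mem_insert_of_mem (Finset.mem_union_left _ hf)) 0
    rwa [comp_hiter_zero] at hk0
  have hf₀0 : μ f₀ = 0 := by
    have hμv : μ v = cf f₀ * μ f₀ := by
      rw [← hcf, map_sum]
      rw [Finset.sum_eq_single_of_mem f₀ hf₀F ?_]
      · rw [map_smul, smul_eq_mul]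
      · intro b hb hbne
        rw [map_smul, smul_eq_mul, hmemF b (Finset.mem_erase.mpr ⟨hbne, hb⟩), mul_zero]
    have hμk : μ k = 0 := by
      refine hKkill k ?_
      rw [← hKset]
      exact hkK
    have hμvk : μ (1 : C(X, ℝ)) = μ v + μ k := by rw [← hvk, map_add]
    rw [hμ1, hμk, add_zero, hμv] at hμvk
    rcases mul_eq_zero.mp hμvk.symm with h | h
    · exact absurd h hcf₀
    · exact h
  have hFkill : ∀ f ∈ F, μ f = 0 := by
    intro f hf
    rcases eq_or_ne f f₀ with rfl | hne
    · exact hf₀0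
    · exact hmemF f (Finset.mem_erase.mpr ⟨hne, hf⟩)
  -- μ kills everything.
  have hfinal : ∀ z : C(X, ℝ), μ z = 0 := by
    have hsub2 : ((Submodule.span ℝ (iterSet T (F : Set C(X, ℝ)) ∪ cobSet T)) : Set C(X, ℝ))
        ⊆ {z : C(X, ℝ) | μ z = 0} := by
      intro z hz
      have hz' : z ∈ Submodule.span ℝ (iterSet T (F : Set C(X, ℝ)) ∪ cobSet T) := hz
      refine Submodule.span_induction ?_ ?_ ?_ ?_ hz'
      · rintro w (⟨f, hf, n, rfl⟩ | hw)
        · have heq : f.comp ((hiter T n : X ≃ₜ X) : C(X, X))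
              = f + (f.comp ((hiter T n : X ≃ₜ X) : C(X, X)) - f) := by abel
          have hc2 : μ (f.comp ((hiter T n : X ≃ₜ X) : C(X, X)) - f) = 0 := by
            refine hKkill _ ?_
            refine subset_closure ?_
            have hmem := iter_mem_cob T f n
            have : f.comp ((hiter T n : X ≃ₜ X) : C(X, X)) - f
                ∈ ((LinearMap.range (cobL T) : Submodule ℝ C(X, ℝ)) : Set C(X, ℝ)) := hmem
            rwa [range_cobL] at this
          show μ _ = 0
          rw [heq, map_add, hFkill f hf, hc2, add_zero]
        · show μ w = 0
          exact hKkill w (subset_closure hw)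
      · simp
      · intro a b _ _ ha hb
        simp only [Set.mem_setOf_eq] at *
        rw [map_add, ha, hb, add_zero]
      · intro a w _ hw
        simp only [Set.mem_setOf_eq] at *
        rw [map_smul, smul_eq_mul, hw, mul_zero]
    intro z
    have h1 : closure ((Submodule.span ℝ (iterSet T (F : Set C(X, ℝ)) ∪ cobSet T)) :
        Set C(X, ℝ)) ⊆ {z : C(X, ℝ) | μ z = 0} := closure_minimal hsub2 hker_closed
    have h2 : z ∈ closure ((Submodule.span ℝ (iterSet T (F : Set C(X, ℝ)) ∪ cobSet T)) :
        Set C(X, ℝ)) := by rw [hF]; trivial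
    exact h1 h2
  have hcontra : μ x₀ = 0 := hfinal x₀
  linarith
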